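/- For all real numbers x, k, t with 0 ≤ x ≤ k ≤ 1 and 0 ≤ t ≤ 1, we have (1+x)^t ≤ 1 + ((1+k)^t - 1)/k^t · x^t. -/

import Mathlib

private lemma aux_deriv (t : ℝ) {y : ℝ} (hy : 0 < y) :
    HasDerivAt (fun y : ℝ => ((1+y)^t - 1) * y^(-t))
      (t * (1+y)^(t-1) * y^(-t) + ((1+y)^t - 1) * (-t * y^(-t-1))) y := by
  have h1 : HasDerivAt (fun y : ℝ => (1+y)^t) (t * (1+y)^(t-1)) y := by
    have := (Real.hasDerivAt_rpow_const (p := t) (x := 1+y)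
      (Or.inl (by positivity))).comp y ((hasDerivAt_id y).const_add 1)
    rw [mul_one] at this
    exact this
  have h2 : HasDerivAt (fun y : ℝ => y^(-t)) (-t * y^(-t-1)) y := by
    simpa using Real.hasDerivAt_rpow_const (p := -t) (x := y) (Or.inl hy.ne')
  exact (h1.sub_const 1).mul h2

theorem stmt_2 (x k t : ℝ) (hx : 0 ≤ x) (hxk : x ≤ k) (hk1 : k ≤ 1) (hk0 : 0 < k)
    (ht0 : 0 ≤ t) (ht1 : t ≤ 1) :
    (1 + x) ^ t ≤ 1 + ((1 + k) ^ t - 1) / k ^ t * x ^ t := by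
  rcases eq_or_lt_of_le ht0 with rfl | ht0'
  · simp
  rcases eq_or_lt_of_le hx with rfl | hx'
  · simp [Real.zero_rpow ht0'.ne']
  -- main case: 0 < x ≤ k, 0 < t
  have hmono : MonotoneOn (fun y : ℝ => ((1+y)^t - 1) * y^(-t)) (Set.Icc x k) := by
    apply monotoneOn_of_deriv_nonneg (convex_Icc x k)
    · intro y hy
      exact ((aux_deriv t (lt_of_lt_of_le hx' hy.1)).differentiableAt.continuousAt).continuousWithinAt
    · intro y hy
      rw [interior_Icc] at hy
      exact ((aux_deriv t (lt_trans hx' hy.1)).differentiableAt).differentiableWithinAt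
    · intro y hy
      rw [interior_Icc] at hy
      have hy0 : 0 < y := lt_trans hx' hy.1
      rw [(aux_deriv t hy0).deriv]
      have e1 : y^(-t) = y * y^(-t-1) := by
        conv_lhs => rw [show (-t : ℝ) = (-t-1) + 1 by ring]
        rw [Real.rpow_add_one hy0.ne', mul_comm]
      have e2 : (1+y)^t = (1+y) * (1+y)^(t-1) := by
        conv_lhs => rw [show t = (t-1) + 1 by ring]
        rw [Real.rpow_add_one (by positivity : (1+y) ≠ 0), mul_comm]
      have h3 : (1+y)^(t-1) ≤ 1 :=
        Real.rpow_le_one_of_one_le_of_nonpos (by linarith) (by linarith)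
      have h4 : (0:ℝ) ≤ y^(-t-1) := (Real.rpow_pos_of_pos hy0 _).le
      rw [e1]
      have : t * (1+y)^(t-1) * (y * y^(-t-1)) + ((1+y)^t - 1) * (-t * y^(-t-1))
          = t * y^(-t-1) * (y * (1+y)^(t-1) - (1+y)^t + 1) := by ring
      rw [this, e2]
      have h5 : y * (1+y)^(t-1) - (1+y) * (1+y)^(t-1) + 1 = 1 - (1+y)^(t-1) := by ring
      rw [h5]
      have : 0 ≤ 1 - (1+y)^(t-1) := by linarith
      positivity
  have h := hmono (Set.mem_Icc.mpr ⟨le_rfl, hxk⟩) (Set.mem_Icc.mpr ⟨hxk, le_rfl⟩) hxk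
  simp only at h
  rw [Real.rpow_neg hx'.le, Real.rpow_neg hk0.le] at h
  have hxt : (0:ℝ) < x^t := Real.rpow_pos_of_pos hx' t
  have h2 : (1+x)^t - 1 ≤ ((1+k)^t - 1) * (k^t)⁻¹ * x^t := by
    have := mul_le_mul_of_nonneg_right h hxt.le
    rwa [mul_assoc, inv_mul_cancel₀ hxt.ne', mul_one] at this
  rw [div_eq_mul_inv]
  linarith
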